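/- arXiv:2604.08264 — 8 statements merged into one kernel-verified Lean document; each statement's English description precedes it below -/
import Mathlib

section
/- Let C = 1/(4e), r_1 > 4e, and define r_2 = 2C r_1² and r_{n+1} = C r_n² ∏_{i=1}^n (1 + r_n/r_i) for n > 2. Then r_{n+1}/r_n > C r_n for all n, and r_{n+j} > 2^j r_n for all j, n ≥ 1. -/
open Finset

theorem baker_sequence_growth (C : ℝ) (r : ℕ → ℝ)
    (hC : C = 1 / (4 * Real.exp 1))
    (hpos : ∀ n, 1 ≤ n → 0 < r n)
    (hr1 : r 1 > 4 * Real.exp 1)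
    (hr2 : r 2 = 2 * C * r 1 ^ 2)
    (hrec : ∀ n, 2 ≤ n → r (n + 1) = C * r n ^ 2 * ∏ i ∈ Finset.Icc 1 n, (1 + r n / r i)) :
    (∀ n, 1 ≤ n → r (n + 1) / r n > C * r n) ∧
    (∀ j n, 1 ≤ j → 1 ≤ n → r (n + j) > 2 ^ j * r n) := by
  have he : 0 < Real.exp 1 := Real.exp_pos 1
  have hCpos : 0 < C := by rw [hC]; positivity
  have hCr : ∀ x : ℝ, x > 4 * Real.exp 1 → 1 < C * x := by
    intro x hx
    rw [hC, div_mul_eq_mul_div, lt_div_iff₀ (by positivity)]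
    linarith
  have hprod : ∀ n, 1 ≤ n → (2:ℝ) ≤ ∏ i ∈ Finset.Icc 1 n, (1 + r n / r i) := by
    intro n hn
    have hmem : n ∈ Finset.Icc 1 n := by simp [hn]
    have h1 : ∀ i ∈ Finset.Icc 1 n, (1:ℝ) ≤ 1 + r n / r i := by
      intro i hi
      simp only [Finset.mem_Icc] at hi
      have := div_pos (hpos n hn) (hpos i hi.1)
      linarith
    have h2 : (1:ℝ) ≤ ∏ i ∈ (Finset.Icc 1 n).erase n, (1 + r n / r i) := by
      have := Finset.prod_le_prod (s := (Finset.Icc 1 n).erase n)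
        (f := fun _ => (1:ℝ)) (g := fun i => 1 + r n / r i)
        (fun i _ => zero_le_one)
        (fun i hi => h1 i (Finset.mem_of_mem_erase hi))
      simpa using this
    have h3 := Finset.mul_prod_erase (Finset.Icc 1 n) (fun i => 1 + r n / r i) hmem
    have h4 : (1:ℝ) + r n / r n = 2 := by rw [div_self (hpos n hn).ne']; ring
    rw [← h3]
    rw [h4]
    nlinarith
  have hstep : ∀ n, 1 ≤ n → r n > 4 * Real.exp 1 → r (n + 1) > 2 * r n := by
    intro n hn hrn
    have hC1 := hCr _ hrn
    have hp := hpos n hn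
    rcases eq_or_lt_of_le hn with h1 | h2
    · subst h1
      rw [hr2]; nlinarith
    · have h2' : 2 ≤ n := h2
      rw [hrec n h2']
      have hP := hprod n hn
      nlinarith [mul_le_mul_of_nonneg_left hP (le_of_lt (mul_pos hCpos (pow_pos hp 2)))]
  have hkey : ∀ n, 1 ≤ n → r n > 4 * Real.exp 1 := by
    intro n hn
    induction n, hn using Nat.le_induction with
    | base => exact hr1
    | succ n hn ih =>
      have := hstep n hn ih
      nlinarith
  have hdouble : ∀ n, 1 ≤ n → r (n + 1) > 2 * r n := fun n hn => hstep n hn (hkey n hn)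
  constructor
  · intro n hn
    have hp := hpos n hn
    rw [gt_iff_lt, lt_div_iff₀ hp]
    rcases eq_or_lt_of_le hn with h1 | h2
    · subst h1
      have := hCr _ hr1
      rw [hr2]; nlinarith
    · rw [hrec n h2]
      have hP := hprod n hn
      nlinarith [mul_pos hCpos (mul_pos hp hp)]
  · intro j n hj hn
    induction j, hj using Nat.le_induction with
    | base => simpa using hdouble n hn
    | succ j hj ih =>
      have h1 : 1 ≤ n + j := le_trans hn (Nat.le_add_right n j)
      have h2 := hdouble (n + j) h1
      have h3 : r (n + (j + 1)) > 2 * r (n + j) := by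
        rw [show n + (j + 1) = (n + j) + 1 from rfl]; exact h2
      have h2j : (0:ℝ) < 2 ^ j := by positivity
      rw [pow_succ]
      nlinarith
end

section
/- Let (r_n) be the Baker sequence: C = 1/(4e), r_1 > 4e, r_2 = 2C r_1², r_{n+1} = C r_n² ∏_{i=1}^n (1 + r_n/r_i). Then for every fixed natural number m, lim_{n→∞} r_{n+1}/r_n^m = ∞, and consequently lim_{n→∞} (log r_{n+1})/(log r_n) = ∞. -/
open Finset Filter

theorem baker_sequence_superpolynomial_growth (C : ℝ) (r : ℕ → ℝ)
    (hC : C = 1 / (4 * Real.exp 1))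
    (hpos : ∀ n, 1 ≤ n → 0 < r n)
    (hr1 : r 1 > 4 * Real.exp 1)
    (hr2 : r 2 = 2 * C * r 1 ^ 2)
    (hrec : ∀ n, 2 ≤ n → r (n + 1) = C * r n ^ 2 * ∏ i ∈ Finset.Icc 1 n, (1 + r n / r i)) :
    (∀ m : ℕ, Tendsto (fun n => r (n + 1) / r n ^ m) atTop atTop) ∧
    Tendsto (fun n => Real.log (r (n + 1)) / Real.log (r n)) atTop atTop := by
  have hepos : (0:ℝ) < Real.exp 1 := Real.exp_pos 1
  have he1 : (1:ℝ) < Real.exp 1 := by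
    have := Real.add_one_lt_exp (x := 1) one_ne_zero
    linarith
  have hCpos : 0 < C := by rw [hC]; positivity
  have hfac : ∀ n, 2 ≤ n → ∀ i ∈ Finset.Icc 1 n, (1:ℝ) ≤ 1 + r n / r i := by
    intro n hn i hi
    simp only [Finset.mem_Icc] at hi
    have h1 : 0 < r i := hpos i hi.1
    have h2 : 0 < r n := hpos n (by omega)
    nlinarith [div_pos h2 h1]
  have h2 : ∀ n, 1 ≤ n → 2 * C * r n ^ 2 ≤ r (n + 1) := by
    intro n hn
    rcases eq_or_lt_of_le hn with h | h
    · rw [← h]; exact le_of_eq hr2.symm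
    · have hn2 : 2 ≤ n := h
      rw [hrec n hn2]
      have hrn : 0 < r n := hpos n hn
      have hmem : n ∈ Finset.Icc 1 n := by simp; omega
      have hprod : (1 + r n / r n : ℝ) ≤ ∏ i ∈ Finset.Icc 1 n, (1 + r n / r i) := by
        have e1 : ∏ i ∈ Finset.Icc 1 n, (if i = n then (1 + r n / r i) else 1)
            = 1 + r n / r n := by
          rw [Finset.prod_ite_eq' (Finset.Icc 1 n) n (fun i => 1 + r n / r i), if_pos hmem]
        rw [← e1]
        apply Finset.prod_le_prod
        · intro i hi
          split
          · have := hfac n hn2 i hi; linarith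
          · norm_num
        · intro i hi
          split
          · exact le_rfl
          · exact hfac n hn2 i hi
      rw [div_self hrn.ne'] at hprod
      have hmul := mul_le_mul_of_nonneg_left hprod (show (0:ℝ) ≤ C * r n ^ 2 by positivity)
      linarith
  have h1 : ∀ n, 1 ≤ n → 4 * Real.exp 1 < r n := by
    intro n hn
    induction n with
    | zero => omega
    | succ k ih =>
      rcases Nat.lt_or_ge 1 (k+1) with h | h
      · have hk : 1 ≤ k := by omega
        have hrk := ih hk
        have hrkpos := hpos k hk
        have hh := h2 k hk
        have hCr : 1 < C * r k := by
          rw [hC, div_mul_eq_mul_div, lt_div_iff₀ (by positivity)]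
          linarith
        nlinarith
      · have : k = 0 := by omega
        subst this
        exact hr1
  have hone : ∀ n, 1 ≤ n → 1 < r n := by
    intro n hn
    have := h1 n hn
    nlinarith
  have hgrow : ∀ n, 1 ≤ n → 2 * r n ≤ r (n+1) := by
    intro n hn
    have hrn := hpos n hn
    have hCr : 1 < C * r n := by
      have := h1 n hn
      rw [hC, div_mul_eq_mul_div, lt_div_iff₀ (by positivity)]; linarith
    have := h2 n hn
    nlinarith
  have hge : ∀ n : ℕ, 1 ≤ n → (n : ℝ) ≤ r n := by
    intro n hn
    induction n with
    | zero => omega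
    | succ k ih =>
      rcases Nat.lt_or_ge 1 (k+1) with h | h
      · have hk : 1 ≤ k := by omega
        have hg := hgrow k hk
        have hik := ih hk
        have hk1 : (1:ℝ) ≤ (k:ℝ) := by exact_mod_cast hk
        push_cast
        linarith
      · have : k = 0 := by omega
        subst this
        show ((1:ℕ):ℝ) ≤ r 1
        push_cast
        nlinarith [hr1]
  have hrt : Tendsto r atTop atTop := by
    apply tendsto_atTop_mono' atTop _ tendsto_natCast_atTop_atTop
    filter_upwards [eventually_ge_atTop 1] with n hn using hge n hn
  have main : ∀ m : ℕ, Tendsto (fun n => r (n + 1) / r n ^ m) atTop atTop := by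
    intro m
    set K : ℝ := ∏ i ∈ Finset.Icc 1 m, r i with hK
    have hKpos : 0 < K := Finset.prod_pos (fun i hi => hpos i (Finset.mem_Icc.mp hi).1)
    have key : ∀ n, 2 ≤ n → m ≤ n → C / K * r n ^ 2 ≤ r (n+1) / r n ^ m := by
      intro n hn2 hmn
      have hrn : 0 < r n := hpos n (by omega)
      have hsub : Finset.Icc 1 m ⊆ Finset.Icc 1 n := Finset.Icc_subset_Icc le_rfl hmn
      have step1 : ∏ i ∈ Finset.Icc 1 m, (1 + r n / r i)
          ≤ ∏ i ∈ Finset.Icc 1 n, (1 + r n / r i) := by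
        have e1 : ∏ i ∈ Finset.Icc 1 m, (1 + r n / r i)
            = ∏ i ∈ Finset.Icc 1 n, (if i ∈ Finset.Icc 1 m then (1 + r n / r i) else 1) := by
          rw [← Finset.prod_filter, Finset.filter_mem_eq_inter,
            Finset.inter_eq_right.mpr hsub]
        rw [e1]
        apply Finset.prod_le_prod
        · intro i hi
          split
          · have := hfac n hn2 i hi; linarith
          · norm_num
        · intro i hi
          split
          · exact le_rfl
          · exact hfac n hn2 i hi
      have step2 : ∏ i ∈ Finset.Icc 1 m, (r n / r i)
          ≤ ∏ i ∈ Finset.Icc 1 m, (1 + r n / r i) := by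
        apply Finset.prod_le_prod
        · intro i hi
          exact le_of_lt (div_pos hrn (hpos i (Finset.mem_Icc.mp hi).1))
        · intro i hi; linarith
      have step3 : ∏ i ∈ Finset.Icc 1 m, (r n / r i) = r n ^ m / K := by
        rw [Finset.prod_div_distrib, Finset.prod_const, Nat.card_Icc]
        simp [hK]
      rw [step3] at step2
      have hpm : 0 < r n ^ m := pow_pos hrn m
      rw [le_div_iff₀ hpm, hrec n hn2]
      have heq : C / K * r n ^ 2 * r n ^ m = C * r n ^ 2 * (r n ^ m / K) := by
        field_simp
      rw [heq]
      have hc2 : 0 ≤ C * r n ^ 2 := by positivity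
      calc C * r n ^ 2 * (r n ^ m / K) ≤ C * r n ^ 2 * ∏ i ∈ Finset.Icc 1 m, (1 + r n / r i) :=
            mul_le_mul_of_nonneg_left step2 hc2
        _ ≤ C * r n ^ 2 * ∏ i ∈ Finset.Icc 1 n, (1 + r n / r i) :=
            mul_le_mul_of_nonneg_left step1 hc2
    apply tendsto_atTop_mono' atTop _ hrt
    filter_upwards [eventually_ge_atTop (max 2 m), hrt.eventually_ge_atTop (K / C)]
      with n hn hKC
    have hn2 : 2 ≤ n := le_trans (le_max_left 2 m) hn
    have hmn : m ≤ n := le_trans (le_max_right 2 m) hn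
    have hk := key n hn2 hmn
    have hrn : 0 < r n := hpos n (by omega)
    have hCK : 1 ≤ C / K * r n := by
      rw [div_mul_eq_mul_div, le_div_iff₀ hKpos]
      rw [div_le_iff₀ hCpos] at hKC
      nlinarith [hKC]
    calc r n = 1 * r n := (one_mul _).symm
      _ ≤ (C / K * r n) * r n := by nlinarith
      _ = C / K * r n ^ 2 := by ring
      _ ≤ r (n+1) / r n ^ m := hk
  refine ⟨main, ?_⟩
  rw [tendsto_atTop]
  intro b
  set m : ℕ := ⌈b⌉₊ with hm
  filter_upwards [(main m).eventually_ge_atTop 1, eventually_ge_atTop 1] with n h1' hn1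
  have hrn1 : 1 < r n := hone n hn1
  have hrn1' : 1 < r (n+1) := hone (n+1) (by omega)
  have hlogn : 0 < Real.log (r n) := Real.log_pos hrn1
  have hpow : r n ^ m ≤ r (n+1) := by
    have hp : 0 < r n ^ m := pow_pos (by linarith) m
    rw [le_div_iff₀ hp, one_mul] at h1'
    exact h1'
  have hlog : (m:ℝ) * Real.log (r n) ≤ Real.log (r (n+1)) := by
    rw [← Real.log_pow]
    exact Real.log_le_log (pow_pos (by linarith) m) hpow
  have hb : b ≤ (m:ℝ) := Nat.le_ceil b
  rw [le_div_iff₀ hlogn]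
  nlinarith
end

section
/- Let (r_n) be the Baker sequence with C = 1/(4e), r_1 > 4e, r_{n+1} = C r_n² ∏_{i=1}^n (1 + r_n/r_i). Then for all sufficiently large n, r_n² < √(r_{n+1}), i.e. the annulus {z : r_n² < |z| < √(r_{n+1})} is nonempty. -/
open Finset Filter

theorem baker_annuli_nonempty (C : ℝ) (r : ℕ → ℝ)
    (hC : C = 1 / (4 * Real.exp 1))
    (hpos : ∀ n, 1 ≤ n → 0 < r n)
    (hr1 : r 1 > 4 * Real.exp 1)
    (hr2 : r 2 = 2 * C * r 1 ^ 2)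
    (hrec : ∀ n, 2 ≤ n → r (n + 1) = C * r n ^ 2 * ∏ i ∈ Finset.Icc 1 n, (1 + r n / r i)) :
    ∀ᶠ n in atTop, r n ^ 2 < Real.sqrt (r (n + 1)) ∧
      {z : ℂ | r n ^ 2 < ‖z‖ ∧ ‖z‖ < Real.sqrt (r (n + 1))}.Nonempty := by
  have he : (0:ℝ) < Real.exp 1 := Real.exp_pos 1
  have hCpos : 0 < C := by rw [hC]; positivity
  -- step 1: 4e < r n and r n < r (n+1) for n ≥ 1
  have key : ∀ n, 1 ≤ n → 4 * Real.exp 1 < r n ∧ r n < r (n + 1) := by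
    intro n hn
    induction n, hn using Nat.le_induction with
    | base =>
      refine ⟨hr1, ?_⟩
      have h2 : r 2 = r 1 ^ 2 / (2 * Real.exp 1) := by
        rw [hr2, hC]; field_simp; ring
      rw [h2, lt_div_iff₀ (by positivity)]
      nlinarith
    | succ n hn ih =>
      have h1 : 4 * Real.exp 1 < r (n + 1) := lt_trans ih.1 ih.2
      refine ⟨h1, ?_⟩
      have hrec' := hrec (n + 1) (by omega)
      have hprod : (2:ℝ) ≤ ∏ i ∈ Finset.Icc 1 (n+1), (1 + r (n+1) / r i) := by
        have h2eq : (1:ℝ) + r (n+1) / r (n+1) = 2 := by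
          rw [div_self (ne_of_gt (hpos (n+1) (by omega)))]; norm_num
        have hsplit := Finset.prod_Icc_succ_top (f := fun i => 1 + r (n+1) / r i)
          (by omega : 1 ≤ n + 1)
        have hone : (1:ℝ) ≤ ∏ i ∈ Finset.Icc 1 n, (1 + r (n+1) / r i) := by
          calc (1:ℝ) = ∏ _i ∈ Finset.Icc 1 n, (1:ℝ) := (Finset.prod_const_one).symm
            _ ≤ _ := Finset.prod_le_prod (fun i _ => zero_le_one) (fun i hi => by
                have hi1 : 1 ≤ i := (Finset.mem_Icc.mp hi).1
                have hd := div_nonneg (hpos (n+1) (by omega)).le (hpos i hi1).le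
                linarith)
        rw [hsplit, h2eq]
        nlinarith
      have hpos1 : 0 < r (n+1) := hpos (n+1) (by omega)
      have h2 : 2 * C * r (n+1) ^ 2 ≤ r (n + 2) := by
        rw [hrec']
        have : C * r (n+1) ^ 2 * 2 ≤ C * r (n+1) ^ 2 * ∏ i ∈ Finset.Icc 1 (n+1), (1 + r (n+1) / r i) :=
          mul_le_mul_of_nonneg_left hprod (by positivity)
        linarith
      have hC2 : 2 * C * r (n+1) ^ 2 = r (n+1) ^ 2 / (2 * Real.exp 1) := by
        rw [hC]; field_simp; ring
      have : r (n+1) < r (n+1) ^ 2 / (2 * Real.exp 1) := by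
        rw [lt_div_iff₀ (by positivity)]; nlinarith
      linarith [hC2 ▸ h2]
  -- monotone
  have hmono : ∀ m n, 1 ≤ m → m ≤ n → r m ≤ r n := by
    intro m n hm hmn
    induction n, hmn using Nat.le_induction with
    | base => exact le_refl _
    | succ n hn ih => exact le_trans ih (le_of_lt (key n (by omega)).2)
  -- choose k with r1*r2/C < 2^k
  obtain ⟨k, hk⟩ := pow_unbounded_of_one_lt (r 1 * r 2 / C) (by norm_num : (1:ℝ) < 2)
  rw [eventually_atTop]
  refine ⟨k + 3, fun n hn => ?_⟩
  have hn2 : 2 ≤ n := by omega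
  have hrn : 0 < r n := hpos n (by omega)
  have hr1p : 0 < r 1 := hpos 1 le_rfl
  have hr2p : 0 < r 2 := hpos 2 (by omega)
  -- main bound : r n ^ 4 < r (n+1)
  have hmain : r n ^ 4 < r (n + 1) := by
    have hrec' := hrec n hn2
    have hsplit : Finset.Icc 1 n = insert 1 (insert 2 (Finset.Icc 3 n)) := by
      ext x; simp [Finset.mem_Icc]; omega
    have h1n : (1:ℕ) ∉ insert 2 (Finset.Icc 3 n) := by simp
    have h2n : (2:ℕ) ∉ Finset.Icc 3 n := by simp
    have hprodeq : ∏ i ∈ Finset.Icc 1 n, (1 + r n / r i)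
        = (1 + r n / r 1) * ((1 + r n / r 2) * ∏ i ∈ Finset.Icc 3 n, (1 + r n / r i)) := by
      rw [hsplit, Finset.prod_insert h1n, Finset.prod_insert h2n]
    have htail : (2:ℝ) ^ (n - 2) ≤ ∏ i ∈ Finset.Icc 3 n, (1 + r n / r i) := by
      have hcard : (Finset.Icc 3 n).card = n - 2 := by rw [Nat.card_Icc]; omega
      calc (2:ℝ) ^ (n - 2) = ∏ _i ∈ Finset.Icc 3 n, (2:ℝ) := by
            rw [Finset.prod_const, hcard]
        _ ≤ _ := Finset.prod_le_prod (fun i _ => by norm_num) (fun i hi => by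
            have hi3 : 3 ≤ i := (Finset.mem_Icc.mp hi).1
            have hin : i ≤ n := (Finset.mem_Icc.mp hi).2
            have hip : 0 < r i := hpos i (by omega)
            have : 1 ≤ r n / r i := (one_le_div hip).mpr (hmono i n (by omega) hin)
            linarith)
    have hf1 : r n / r 1 ≤ 1 + r n / r 1 := by linarith [div_nonneg hrn.le hr1p.le]
    have hf2 : r n / r 2 ≤ 1 + r n / r 2 := by linarith [div_nonneg hrn.le hr2p.le]
    have hlow : r n / r 1 * (r n / r 2 * (2:ℝ) ^ (n - 2))
        ≤ ∏ i ∈ Finset.Icc 1 n, (1 + r n / r i) := by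
      rw [hprodeq]
      have hA : r n / r 2 * (2:ℝ) ^ (n - 2) ≤ (1 + r n / r 2) * ∏ i ∈ Finset.Icc 3 n, (1 + r n / r i) := by
        apply mul_le_mul hf2 htail (by positivity) (by positivity)
      apply mul_le_mul hf1 hA (by positivity) (by positivity)
    have hstep : C * r n ^ 2 * (r n / r 1 * (r n / r 2 * (2:ℝ) ^ (n - 2))) ≤ r (n + 1) := by
      rw [hrec']
      exact mul_le_mul_of_nonneg_left hlow (by positivity)
    have heq : C * r n ^ 2 * (r n / r 1 * (r n / r 2 * (2:ℝ) ^ (n - 2)))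
        = r n ^ 4 * (C * (2:ℝ) ^ (n - 2)) / (r 1 * r 2) := by
      field_simp
    have hbig : r 1 * r 2 < C * (2:ℝ) ^ (n - 2) := by
      have h2k : (2:ℝ) ^ k ≤ (2:ℝ) ^ (n - 2) := by
        apply pow_le_pow_right₀ (by norm_num); omega
      have : r 1 * r 2 / C < (2:ℝ) ^ (n - 2) := lt_of_lt_of_le hk h2k
      rw [div_lt_iff₀ hCpos] at this
      nlinarith
    have hlt : r n ^ 4 < r n ^ 4 * (C * (2:ℝ) ^ (n - 2)) / (r 1 * r 2) := by
      rw [lt_div_iff₀ (by positivity)]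
      have h4 : (0:ℝ) < r n ^ 4 := by positivity
      nlinarith
    linarith [heq ▸ hstep]
  have hsq : r n ^ 2 < Real.sqrt (r (n + 1)) := by
    rw [show r n ^ 4 = (r n ^ 2) ^ 2 by ring] at hmain
    exact (Real.lt_sqrt (by positivity)).mpr hmain
  refine ⟨hsq, ⟨(((r n ^ 2 + Real.sqrt (r (n + 1))) / 2 : ℝ) : ℂ), ?_⟩⟩
  have habs : ‖(((r n ^ 2 + Real.sqrt (r (n + 1))) / 2 : ℝ) : ℂ)‖
      = (r n ^ 2 + Real.sqrt (r (n + 1))) / 2 := by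
    rw [Complex.norm_real, Real.norm_eq_abs, abs_of_nonneg (by positivity)]
  constructor <;> rw [habs] <;> linarith
end

section
/- Let 0 < C < 1/(4e²), and let (r_n) be an increasing sequence of positive reals with r_{n+1} > 2r_n for all n, and suppose there is n₀ with 2^{n₀-1}C > 2r_1 and r_{n+1} = C² ∏_{i=1}^n (1 + r_n/r_i)² for n > n₀. Then r_{n₀+k+1} > 4^{k+1} r_{n₀+k}² for every natural number k. -/
open Finset

set_option maxHeartbeats 1600000 in
theorem squared_baker_sequence_growth (C : ℝ) (r : ℕ → ℝ) (n₀ : ℕ)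
    (hC0 : 0 < C) (hC1 : C < 1 / (4 * Real.exp 1 ^ 2))
    (hpos : ∀ n, 1 ≤ n → 0 < r n)
    (hdouble : ∀ n, 1 ≤ n → r (n + 1) > 2 * r n)
    (hn₀ : 2 ^ (n₀ - 1) * C > 2 * r 1)
    (hrec : ∀ n, n₀ < n → r (n + 1) = C ^ 2 * ∏ i ∈ Finset.Icc 1 n, (1 + r n / r i) ^ 2) :
    ∀ k : ℕ, 1 ≤ k → r (n₀ + k + 1) > 4 ^ (k + 1) * r (n₀ + k) ^ 2 := by
  have hmono : ∀ i j : ℕ, 1 ≤ i → i ≤ j → r i ≤ r j := by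
    intro i j hi hij
    induction j, hij using Nat.le_induction with
    | base => exact le_refl _
    | succ j hj ih =>
      have h1 := hdouble j (hi.trans hj)
      have h2 := hpos j (hi.trans hj)
      linarith
  have hr1 : 0 < r 1 := hpos 1 le_rfl
  have hC16 : C < 1 / 16 := by
    have h9 := Real.exp_one_gt_d9
    have hle : 1 / (4 * Real.exp 1 ^ 2) < 1 / 16 := by
      rw [div_lt_div_iff₀ (by positivity) (by norm_num)]
      nlinarith
    linarith
  intro k hk
  set n := n₀ + k with hn
  have hn1 : 1 ≤ n := le_trans hk (Nat.le_add_left k n₀)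
  have hrn : 0 < r n := hpos n hn1
  have hsplit : ∀ m : ℕ, m ≤ n →
      (∏ i ∈ Finset.Icc 1 n, (1 + r n / r i) ^ 2)
        = (∏ i ∈ Finset.Ioc 0 m, (1 + r n / r i) ^ 2)
          * ∏ i ∈ Finset.Ioc m n, (1 + r n / r i) ^ 2 := by
    intro m hm
    rw [show Finset.Icc 1 n = Finset.Ioc 0 n from Finset.Icc_add_one_left_eq_Ioc 0 n]
    exact (Finset.prod_Ioc_consecutive _ (Nat.zero_le m) hm).symm
  have hfac4 : ∀ i, 1 ≤ i → i ≤ n → (4 : ℝ) ≤ (1 + r n / r i) ^ 2 := by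
    intro i hi hin
    have hri : 0 < r i := hpos i hi
    have h1 : 1 ≤ r n / r i := (one_le_div hri).2 (hmono i n hi hin)
    nlinarith
  have hbound : ∀ m : ℕ, 1 ≤ m →
      (4 : ℝ) ^ (n - m) ≤ ∏ i ∈ Finset.Ioc m n, (1 + r n / r i) ^ 2 := by
    intro m hm
    calc (4 : ℝ) ^ (n - m) = ∏ _i ∈ Finset.Ioc m n, (4 : ℝ) := by
          rw [Finset.prod_const, Nat.card_Ioc]
      _ ≤ _ := by
          apply Finset.prod_le_prod
          · intro i _; norm_num
          · intro i hi
            rw [Finset.mem_Ioc] at hi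
            exact hfac4 i (le_trans hm (le_of_lt hi.1)) hi.2
  rcases Nat.eq_zero_or_pos n₀ with hn₀0 | hn₀1
  · -- n₀ = 0 case
    subst hn₀0
    simp only [Nat.zero_add] at hn ⊢
    have hCr1 : C > 2 * r 1 := by simpa using hn₀
    have hr2 : r 2 = 4 * C ^ 2 := by
      have h := hrec 1 (by norm_num)
      rw [Finset.Icc_self, Finset.prod_singleton, div_self (ne_of_gt hr1)] at h
      rw [h]; ring
    rcases Nat.lt_or_ge k 3 with hk3 | hk3
    · interval_cases k
      · -- k = 1
        rw [hn]
        have : r 2 > 16 * r 1 ^ 2 := by nlinarith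
        show (4:ℝ) ^ (1+1) * r 1 ^ 2 < r (1+1)
        norm_num
        linarith
      · -- k = 2
        rw [hn]
        have h := hrec 2 (by norm_num)
        have hIcc : Finset.Icc 1 2 = ({1, 2} : Finset ℕ) := by decide
        rw [hIcc, Finset.prod_pair (by norm_num), div_self (ne_of_gt (hpos 2 (by norm_num)))] at h
        have hx : 0 < r 2 / r 1 := div_pos (hpos 2 (by norm_num)) hr1
        have hCsmall : 256 * C ^ 2 < 1 := by nlinarith [mul_pos hC0 (by linarith : (0:ℝ) < 1/16 - C)]
        show (4:ℝ) ^ (2+1) * r 2 ^ 2 < r (2+1)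
        rw [h]
        have h1 : (1:ℝ) ≤ (1 + r 2 / r 1) ^ 2 := by nlinarith
        nlinarith [h1, hCsmall, hr2, mul_pos hC0 hC0,
          mul_pos (mul_pos hC0 hC0) (by linarith : (0:ℝ) < 1 - 256 * C ^ 2)]
    · -- k ≥ 3
      have hr2pos : 0 < r 2 := hpos 2 (by norm_num)
      have hr3 : r 3 = 4 * C ^ 2 * (1 + r 2 / r 1) ^ 2 := by
        have h := hrec 2 (by norm_num)
        have hIcc : Finset.Icc 1 2 = ({1, 2} : Finset ℕ) := by decide
        rw [hIcc, Finset.prod_pair (by norm_num), div_self (ne_of_gt hr2pos)] at h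
        rw [h]; ring
      have hx21 : r 2 / r 1 > 2 := (lt_div_iff₀ hr1).2 (by have := hdouble 1 le_rfl; linarith)
      have hr3big : r 3 > 36 * C ^ 2 := by
        have h9 : (9:ℝ) < (1 + r 2 / r 1) ^ 2 := by nlinarith
        rw [hr3]
        nlinarith [mul_pos hC0 hC0, h9]
      have hrkbig : r n > 36 * C ^ 2 :=
        lt_of_lt_of_le hr3big (hmono 3 n (by norm_num) (by omega))
      obtain ⟨j, rfl⟩ : ∃ j, k = j + 3 := ⟨k - 3, by omega⟩
      have h := hrec n (by omega)
      rw [hsplit 2 (by omega)] at h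
      have hIoc02 : Finset.Ioc 0 2 = ({1, 2} : Finset ℕ) := by decide
      rw [hIoc02, Finset.prod_pair (by norm_num)] at h
      have hB := hbound 2 (by norm_num)
      have hnm : n - 2 = j + 1 := by omega
      rw [hnm] at hB
      set B := ∏ i ∈ Finset.Ioc 2 n, (1 + r n / r i) ^ 2 with hBdef
      have hBpos : (0 : ℝ) < B := lt_of_lt_of_le (by positivity) hB
      -- clear denominators
      have hA1 : (1 + r n / r 1) ^ 2 * r 1 ^ 2 = (r 1 + r n) ^ 2 := by
        field_simp
      have hA2 : (1 + r n / r 2) ^ 2 * r 2 ^ 2 = (r 2 + r n) ^ 2 := by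
        field_simp
      have key : 4 ^ (j + 3 + 1) * r n ^ 2 * (r 1 ^ 2 * r 2 ^ 2)
          < C ^ 2 * ((1 + r n / r 1) ^ 2 * (1 + r n / r 2) ^ 2 * B) * (r 1 ^ 2 * r 2 ^ 2) := by
        have e1 : C ^ 2 * ((1 + r n / r 1) ^ 2 * (1 + r n / r 2) ^ 2 * B) * (r 1 ^ 2 * r 2 ^ 2)
            = C ^ 2 * ((1 + r n / r 1) ^ 2 * r 1 ^ 2) * ((1 + r n / r 2) ^ 2 * r 2 ^ 2) * B := by
          ring
        rw [e1, hA1, hA2]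
        -- lower bounds
        have hA1' : r n ^ 2 < (r 1 + r n) ^ 2 := by nlinarith
        have hA2' : 4 * r 2 * r n ≤ (r 2 + r n) ^ 2 := by nlinarith
        have step1 : C ^ 2 * r n ^ 2 * (4 * r 2 * r n) * (4 ^ (j + 1) : ℝ)
            ≤ C ^ 2 * ((r 1 + r n) ^ 2) * ((r 2 + r n) ^ 2) * B := by
          have h1 : C ^ 2 * r n ^ 2 * (4 * r 2 * r n) * (4 ^ (j + 1) : ℝ)
              ≤ C ^ 2 * ((r 1 + r n) ^ 2) * ((r 2 + r n) ^ 2) * (4 ^ (j + 1) : ℝ) := by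
            have hp : (0:ℝ) < 4 ^ (j+1) := by positivity
            have := mul_le_mul (mul_le_mul_of_nonneg_left hA1'.le (by positivity : (0:ℝ) ≤ C^2))
              hA2' (by positivity) (by positivity)
            nlinarith [this, hp]
          calc C ^ 2 * r n ^ 2 * (4 * r 2 * r n) * (4 ^ (j + 1) : ℝ)
              ≤ C ^ 2 * ((r 1 + r n) ^ 2) * ((r 2 + r n) ^ 2) * (4 ^ (j + 1) : ℝ) := h1
            _ ≤ C ^ 2 * ((r 1 + r n) ^ 2) * ((r 2 + r n) ^ 2) * B := by
                apply mul_le_mul_of_nonneg_left hB (by positivity)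
        refine lt_of_lt_of_le ?_ step1
        -- 4^(j+4) * rn^2 * (r1^2 * r2^2) < C^2 * rn^2 * (4*r2*rn) * 4^(j+1)
        rw [hr2]
        have hr1C : r 1 ^ 2 < C ^ 2 / 4 := by nlinarith
        have hp4 : (4:ℝ) ^ (j + 3 + 1) = 64 * 4 ^ (j + 1) := by ring
        rw [hp4]
        have hpj : (0:ℝ) < (4:ℝ) ^ (j + 1) := by positivity
        have hCp : (0:ℝ) < C ^ 2 := by positivity
        have hrn2 : (0:ℝ) < r n ^ 2 := by positivity
        -- LHS = 64*4^(j+1)*rn^2*r1^2*16C^4 < 64*4^(j+1)*rn^2*(C^2/4)*16C^4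
        --     = 256*C^6*rn^2*4^(j+1); RHS = 16 C^4 rn^3 4^(j+1); rn > 36 C^2 ⇒ win
        nlinarith [mul_pos (mul_pos hpj hCp) hrn2,
          mul_pos hpj (mul_pos hrn2 (mul_pos hCp (mul_pos hCp hCp))),
          mul_lt_mul_of_pos_left hrkbig (mul_pos hpj (mul_pos hrn2 (mul_pos hCp hCp))),
          mul_lt_mul_of_pos_left hr1C (mul_pos hpj (mul_pos hrn2 (mul_pos hCp hCp)))]
      have hposmul : (0:ℝ) < r 1 ^ 2 * r 2 ^ 2 := by positivity
      rw [h]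
      exact lt_of_mul_lt_mul_right key (le_of_lt hposmul)
  · -- n₀ ≥ 1 case
    obtain ⟨j, rfl⟩ : ∃ j, k = j + 1 := ⟨k - 1, by omega⟩
    have hCr1 : (2:ℝ) ^ n₀ * C > 4 * r 1 := by
      have he : (2:ℝ) ^ n₀ = 2 * 2 ^ (n₀ - 1) := by
        rw [← pow_succ']
        congr 1
        omega
      rw [he]
      linarith
    have h := hrec n (by omega)
    rw [hsplit 1 hn1] at h
    have hIoc01 : Finset.Ioc 0 1 = ({1} : Finset ℕ) := by decide
    rw [hIoc01, Finset.prod_singleton] at h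
    have hB := hbound 1 (le_refl 1)
    have hnm : n - 1 = n₀ + j := by omega
    rw [hnm] at hB
    set B := ∏ i ∈ Finset.Ioc 1 n, (1 + r n / r i) ^ 2 with hBdef
    have hBpos : (0 : ℝ) < B := lt_of_lt_of_le (by positivity) hB
    have hA1 : (1 + r n / r 1) ^ 2 * r 1 ^ 2 = (r 1 + r n) ^ 2 := by
      field_simp
    have key : 4 ^ (j + 1 + 1) * r n ^ 2 * r 1 ^ 2
        < C ^ 2 * ((1 + r n / r 1) ^ 2 * B) * r 1 ^ 2 := by
      have e1 : C ^ 2 * ((1 + r n / r 1) ^ 2 * B) * r 1 ^ 2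
          = C ^ 2 * ((1 + r n / r 1) ^ 2 * r 1 ^ 2) * B := by ring
      rw [e1, hA1]
      have hA1' : r n ^ 2 < (r 1 + r n) ^ 2 := by nlinarith
      have step1 : C ^ 2 * r n ^ 2 * (4:ℝ) ^ (n₀ + j)
          < C ^ 2 * (r 1 + r n) ^ 2 * B := by
        calc C ^ 2 * r n ^ 2 * (4:ℝ) ^ (n₀ + j)
            < C ^ 2 * (r 1 + r n) ^ 2 * (4:ℝ) ^ (n₀ + j) := by
              apply mul_lt_mul_of_pos_right _ (by positivity)
              exact mul_lt_mul_of_pos_left hA1' (by positivity)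
          _ ≤ C ^ 2 * (r 1 + r n) ^ 2 * B :=
              mul_le_mul_of_nonneg_left hB (by positivity)
      refine lt_of_le_of_lt ?_ step1
      -- 4^(j+2) * rn^2 * r1^2 ≤ C^2 * rn^2 * 4^(n₀+j)
      -- since 16 r1^2 < 4^n₀ C^2
      have hsq : 16 * r 1 ^ 2 < (4:ℝ) ^ n₀ * C ^ 2 := by
        have h2 : ((2:ℝ) ^ n₀) ^ 2 = (4:ℝ) ^ n₀ := by
          rw [← pow_mul, mul_comm, pow_mul]
          norm_num
        nlinarith [pow_pos (by norm_num : (0:ℝ) < 2) n₀]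
      have e2 : (4:ℝ) ^ (n₀ + j) = 4 ^ n₀ * 4 ^ j := pow_add 4 n₀ j
      have e3 : (4:ℝ) ^ (j + 1 + 1) = 16 * 4 ^ j := by ring
      rw [e2, e3]
      have hpj : (0:ℝ) < (4:ℝ) ^ j := by positivity
      have hrn2 : (0:ℝ) < r n ^ 2 := by positivity
      nlinarith [mul_lt_mul_of_pos_left hsq (mul_pos hpj hrn2)]
    rw [h]
    exact lt_of_mul_lt_mul_right key (by positivity)
end

section
/- Let (r_n) be positive reals with r_{n+1} > 2^{n+1} r_n for all large n, and set s_n = ((n+1)/(n+2)) r_{n+1}. Define φ(z) = ∑_{i=1}^∞ 1/(z + r_i). Then for all sufficiently large n, φ(-s_n) > 0. -/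
open Filter

theorem phi_pos_at_neg_sn (r : ℕ → ℝ) (s : ℕ → ℝ) (φ : ℝ → ℝ)
    (hpos : ∀ n, 1 ≤ n → 0 < r n)
    (hgrow : ∀ᶠ n in atTop, r (n + 1) > 2 ^ (n + 1) * r n)
    (hs : ∀ n : ℕ, s n = ((n + 1 : ℝ) / (n + 2)) * r (n + 1))
    (hφ : ∀ x : ℝ, φ x = ∑' i : ℕ, 1 / (x + r (i + 1))) :
    ∀ᶠ n in atTop, φ (-(s n)) > 0 := by
  obtain ⟨N0, hN0⟩ := eventually_atTop.1 hgrow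
  set N := max N0 1 with hNdef
  have hN1 : 1 ≤ N := le_max_right _ _
  have hN : ∀ m, N ≤ m → r (m + 1) > 2 ^ (m + 1) * r m :=
    fun m hm => hN0 m ((le_max_left _ _).trans hm)
  -- monotonicity of r on [N, ∞)
  have hmono : ∀ a b, N ≤ a → a ≤ b → r a ≤ r b := by
    intro a b ha hab
    induction b, hab using Nat.le_induction with
    | base => exact le_refl _
    | succ b hb ih =>
      refine ih.trans (le_of_lt ?_)
      have h1 := hN b (ha.trans hb)
      have h2 : 0 < r b := hpos b (hN1.trans (ha.trans hb))
      have h3 : (1:ℝ) ≤ 2 ^ (b+1) := one_le_pow₀ (by norm_num)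
      nlinarith
  -- geometric growth from any n ≥ N
  have hgeo : ∀ n, N ≤ n → ∀ k, 2 ^ k * r (n + 1) ≤ r (k + n + 1) := by
    intro n hn k
    induction k with
    | zero => simpa using le_refl (r (n+1))
    | succ k ih =>
      have h1 := hN (k + n + 1) (by omega)
      have h2 : 0 < r (k + n + 1) := hpos _ (by omega)
      have h3 : (2:ℝ) ≤ 2 ^ (k + n + 1 + 1) := by
        calc (2:ℝ) = 2^1 := by norm_num
        _ ≤ 2 ^ (k+n+1+1) := pow_le_pow_right₀ (by norm_num) (by omega)
      have : 2 * r (k + n + 1) ≤ r (k + n + 1 + 1) := by nlinarith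
      calc (2:ℝ) ^ (k+1) * r (n+1) = 2 * (2 ^ k * r (n+1)) := by ring
      _ ≤ 2 * r (k + n + 1) := by nlinarith
      _ ≤ r (k + 1 + n + 1) := by rw [show k+1+n+1 = k+n+1+1 by omega]; exact this
  -- bound on initial block
  obtain ⟨M, hM1, hM⟩ : ∃ M : ℝ, 1 ≤ M ∧ ∀ i ≤ N, r i ≤ M := by
    refine ⟨max 1 (∑ i ∈ Finset.range (N+1), |r i|), le_max_left _ _, fun i hi => ?_⟩
    refine le_trans (le_abs_self _) (le_trans ?_ (le_max_right _ _))
    exact Finset.single_le_sum (f := fun j => |r j|) (fun j _ => abs_nonneg _)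
      (Finset.mem_range.2 (by omega))
  have hrN1 : 0 < r (N + 1) := hpos _ (by omega)
  -- eventually (n+2) * M ≤ r (n+1)
  have hE3 : ∀ᶠ n : ℕ in atTop, ((n:ℝ) + 2) * M ≤ r (n + 1) := by
    have hsumm : Summable (fun n : ℕ => ((n:ℝ) + 2) * (1/2) ^ n) := by
      have h1 : Summable (fun n : ℕ => (n:ℝ) ^ 1 * (1/2) ^ n) :=
        summable_pow_mul_geometric_of_norm_lt_one 1 (by rw [Real.norm_eq_abs, abs_of_pos] <;> norm_num)
      have h2 : Summable (fun n : ℕ => (2:ℝ) * (1/2) ^ n) :=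
        (summable_geometric_of_lt_one (by norm_num) (by norm_num)).mul_left 2
      simpa [pow_one, add_mul] using h1.add h2
    have htend := hsumm.tendsto_atTop_zero
    have heps : (0:ℝ) < r (N+1) / (2 ^ N * M) := by positivity
    filter_upwards [htend.eventually_lt_const heps, eventually_ge_atTop N] with n h1 h2
    have hpow : (2:ℝ) ^ (n - N) * 2 ^ N = 2 ^ n := by
      rw [← pow_add]; congr 1; omega
    have h3 : 2 ^ (n - N) * r (N + 1) ≤ r (n + 1) := by
      have := hgeo N le_rfl (n - N)
      rwa [show n - N + N + 1 = n + 1 by omega] at this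
    have h4 : ((n:ℝ) + 2) * M ≤ 2 ^ (n - N) * r (N + 1) := by
      have hp : (0:ℝ) < 2 ^ n := by positivity
      have hpN : (0:ℝ) < 2 ^ N := by positivity
      have hM0 : (0:ℝ) < M := lt_of_lt_of_le one_pos hM1
      rw [lt_div_iff₀ (by positivity : (0:ℝ) < 2 ^ N * M)] at h1
      have hq : ((1:ℝ)/2) ^ n * 2 ^ n = 1 := by rw [← mul_pow]; norm_num
      have h5 : ((n:ℝ) + 2) * M * 2 ^ N < r (N + 1) * 2 ^ n := by
        have h6 := mul_lt_mul_of_pos_right h1 hp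
        calc ((n:ℝ) + 2) * M * 2 ^ N
            = ((n:ℝ) + 2) * (1/2) ^ n * (2 ^ N * M) * 2 ^ n := by
              rw [show ((n:ℝ)+2)*(1/2)^n*(2^N*M)*2^n = ((n:ℝ)+2)*(2^N*M)*((1/2)^n*2^n) by ring, hq]; ring
          _ < r (N + 1) * 2 ^ n := h6
      have h7 : 2 ^ (n-N) * r (N+1) * 2 ^ N = r (N+1) * 2 ^ n := by
        rw [show (2:ℝ)^(n-N)*r (N+1)*2^N = r (N+1)*(2^(n-N)*2^N) by ring, hpow]
      rw [← mul_le_mul_iff_of_pos_right hpN]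
      linarith
    linarith
  filter_upwards [hE3, eventually_ge_atTop N, eventually_ge_atTop 1] with n hE hnN hn1
  set f : ℕ → ℝ := fun i => 1 / (-(s n) + r (i + 1)) with hf
  have hrn1 : 0 < r (n + 1) := hpos _ (by omega)
  have hn2 : (0:ℝ) < (n:ℝ) + 2 := by positivity
  have hn0 : (0:ℝ) < (n:ℝ) := by exact_mod_cast hn1
  have hM0 : (0:ℝ) < M := lt_of_lt_of_le one_pos hM1
  -- small indices are below r(n+1)/(n+2)
  have hsmall : ∀ i, i < n → r (i + 1) ≤ r (n + 1) / ((n:ℝ) + 2) := by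
    intro i hi
    rcases le_or_gt (i + 1) N with hc | hc
    · have h1 : r (i+1) ≤ M := hM _ hc
      rw [le_div_iff₀ hn2]
      nlinarith [hE]
    · have h1 : r (i+1) ≤ r n := hmono (i+1) n (by omega) (by omega)
      have h2 := hN n hnN
      have h3 : ((n:ℝ) + 2) ≤ 2 ^ (n+1) := by
        have h4 : n + 2 ≤ 2 ^ (n+1) := Nat.lt_two_pow_self (n := n+1)
        exact_mod_cast h4
      have hrn : 0 < r n := hpos _ hn1
      rw [le_div_iff₀ hn2]
      nlinarith
  have hs' : s n * ((n:ℝ)+2) = ((n:ℝ)+1) * r (n+1) := by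
    rw [hs]; field_simp
  -- tail denominators
  have hden : ∀ k : ℕ, 2 ^ k * r (n+1) / ((n:ℝ)+2) ≤ -(s n) + r (k + n + 1) := by
    intro k
    have h1 := hgeo n hnN k
    have hk1 : (1:ℝ) ≤ 2 ^ k := one_le_pow₀ (by norm_num)
    rw [div_le_iff₀ hn2]
    nlinarith [mul_le_mul_of_nonneg_left h1 (le_of_lt hn2),
      mul_le_mul_of_nonneg_left hk1 (by positivity : (0:ℝ) ≤ ((n:ℝ)+1) * r (n+1))]
  have hdpos : ∀ k : ℕ, 0 < -(s n) + r (k + n + 1) :=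
    fun k => lt_of_lt_of_le (by positivity) (hden k)
  have htail_nonneg : ∀ k : ℕ, 0 ≤ f (k + n) := by
    intro k
    have := hdpos k
    show 0 ≤ 1 / (-(s n) + r (k + n + 1))
    positivity
  have hgsum : Summable (fun k : ℕ => (((n:ℝ)+2)/r (n+1)) * (1/2)^k) :=
    (summable_geometric_of_lt_one (by norm_num) (by norm_num)).mul_left _
  have hbound : ∀ k : ℕ, f (k + n) ≤ (((n:ℝ)+2)/r (n+1)) * (1/2)^k := by
    intro k
    have h1 := hden k
    have hq : (0:ℝ) < 2 ^ k * r (n+1) / ((n:ℝ)+2) := by positivity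
    have h3 : 1 / (-(s n) + r (k + n + 1)) ≤ 1 / (2 ^ k * r (n+1) / ((n:ℝ)+2)) :=
      one_div_le_one_div_of_le hq h1
    have h4 : 1 / (2 ^ k * r (n+1) / ((n:ℝ)+2)) = (((n:ℝ)+2)/r (n+1)) * (1/2)^k := by
      rw [one_div_div, one_div_pow, div_mul_div_comm, mul_one, mul_comm ((2:ℝ)^k)]
    show 1 / (-(s n) + r (k + n + 1)) ≤ _
    rw [← h4]; exact h3
  have htails : Summable (fun k => f (k + n)) :=
    Summable.of_nonneg_of_le htail_nonneg hbound hgsum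
  have hsummf : Summable f := (summable_nat_add_iff n).1 htails
  -- lower bound for the first n terms
  have hfront : ∀ i ∈ Finset.range n, -(((n:ℝ)+2)/((n:ℝ) * r (n+1))) ≤ f i := by
    intro i hi
    rw [Finset.mem_range] at hi
    have h1 := hsmall i hi
    have hb : -((n:ℝ)/((n:ℝ)+2) * r (n+1)) < 0 := by
      have : 0 < (n:ℝ)/((n:ℝ)+2) * r (n+1) := mul_pos (div_pos hn0 hn2) hrn1
      linarith
    have hle : -(s n) + r (i+1) ≤ -((n:ℝ)/((n:ℝ)+2) * r (n+1)) := by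
      have e : ((n:ℝ)+1)/((n:ℝ)+2) * r (n+1) - (n:ℝ)/((n:ℝ)+2) * r (n+1) = r (n+1)/((n:ℝ)+2) := by
        field_simp; ring
      rw [hs]; linarith
    have h2 := one_div_le_one_div_of_neg_of_le hb hle
    have e2 : 1 / -((n:ℝ)/((n:ℝ)+2) * r (n+1)) = -(((n:ℝ)+2)/((n:ℝ) * r (n+1))) := by
      rw [div_neg, div_mul_eq_mul_div, one_div_div]
    rw [e2] at h2
    exact h2
  have hfrontsum : -(((n:ℝ)+2)/r (n+1)) ≤ ∑ i ∈ Finset.range n, f i := by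
    have h1 := Finset.sum_le_sum hfront
    rw [Finset.sum_const, Finset.card_range, nsmul_eq_mul] at h1
    have e : (n : ℝ) * (-(((n:ℝ)+2)/((n:ℝ) * r (n+1)))) = -(((n:ℝ)+2)/r (n+1)) := by
      field_simp
    linarith
  -- the term at index n
  have hfn : f n = ((n:ℝ)+2)/r (n+1) := by
    show 1 / (-(s n) + r (n+1)) = _
    rw [show -(s n) + r (n+1) = r (n+1)/((n:ℝ)+2) by
      rw [eq_div_iff (ne_of_gt hn2)]; linarith [hs']]
    rw [one_div_div]
  have hf1 : 0 < f (1 + n) := by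
    have := hdpos 1
    show 0 < 1 / (-(s n) + r (1 + n + 1))
    positivity
  have htail2 : f (0 + n) + f (1 + n) ≤ ∑' k, f (k + n) := by
    have h1 := Summable.sum_le_tsum (Finset.range 2) (fun k _ => htail_nonneg k) htails
    simpa [Finset.sum_range_succ] using h1
  have hf0 : f (0 + n) = f n := by norm_num
  have hsplit := Summable.sum_add_tsum_nat_add n hsummf
  rw [hφ]
  show (0:ℝ) < ∑' i, f i
  rw [← hsplit]
  rw [hf0, hfn] at htail2
  linarith
end

section
/- Let (r_n) be the Baker sequence (C = 1/(4e), r_1 > 4e, r_{n+1} = C r_n² ∏_{i=1}^n (1 + r_n/r_i)) and let z satisfy 4 r_n < |z| < r_{n+1}/4. Writing r = |z|, the sums S₁ = ∑_{k=1}^{n-1} log((1 + r_k/r)/(1 - r_k/r)) and S₂ = ∑_{k=n+2}^∞ log((1 + r/r_k)/(1 - r/r_k)) satisfy S₁ < 3r_{n-1}/(2 r_n) and S₂ < 3 r_{n+1}/(2 r_{n+2}). -/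
open Finset

lemma log_ratio_lt_three_mul {x : ℝ} (h0 : 0 < x) (h2 : x < 1/2) :
    Real.log ((1 + x) / (1 - x)) < 3 * x := by
  have h1 : (0:ℝ) < 1 - x := by linarith
  have h1' : (0:ℝ) < 1 + x := by linarith
  rw [Real.log_div (by positivity) (by linarith)]
  have hA : Real.log (1 + x) < x := by
    have := Real.log_lt_sub_one_of_pos h1' (by linarith)
    linarith
  have hB : -Real.log (1 - x) ≤ 2 * x := by
    have h := Real.log_le_sub_one_of_pos (show (0:ℝ) < (1 - x)⁻¹ by positivity)
    rw [Real.log_inv] at h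
    have he : (1 - x)⁻¹ - 1 = x / (1 - x) := by field_simp; ring
    rw [he] at h
    have : x / (1 - x) ≤ 2 * x := by
      rw [div_le_iff₀ h1]; nlinarith
    linarith
  linarith

set_option maxHeartbeats 1000000 in
theorem baker_log_sum_estimates (C : ℝ) (r : ℕ → ℝ) (n : ℕ) (z : ℂ)
    (hC : C = 1 / (4 * Real.exp 1))
    (hpos : ∀ k, 1 ≤ k → 0 < r k)
    (hr1 : r 1 > 4 * Real.exp 1)
    (hr2 : r 2 = 2 * C * r 1 ^ 2)
    (hrec : ∀ k, 2 ≤ k → r (k + 1) = C * r k ^ 2 * ∏ i ∈ Finset.Icc 1 k, (1 + r k / r i))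
    (hn : 2 ≤ n)
    (hz1 : 4 * r n < ‖z‖) (hz2 : ‖z‖ < r (n + 1) / 4) :
    (∑ k ∈ Finset.Icc 1 (n - 1),
        Real.log ((1 + r k / ‖z‖) / (1 - r k / ‖z‖)))
      < 3 * r (n - 1) / (2 * r n) ∧
    (∑' k : ℕ,
        Real.log ((1 + ‖z‖ / r (n + 2 + k)) / (1 - ‖z‖ / r (n + 2 + k))))
      < 3 * r (n + 1) / (2 * r (n + 2)) := by
  have he : (0:ℝ) < Real.exp 1 := Real.exp_pos 1
  have hC0 : 0 < C := by rw [hC]; positivity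
  -- product lower bound
  have hprod : ∀ m, 1 ≤ m → (2:ℝ) ≤ ∏ i ∈ Finset.Icc 1 m, (1 + r m / r i) := by
    intro m hm
    have hrm := hpos m hm
    have hmem : m ∈ Finset.Icc 1 m := Finset.mem_Icc.mpr ⟨hm, le_refl m⟩
    have h1le : (1:ℝ) ≤ ∏ i ∈ Finset.Icc 1 m \ {m}, (1 + r m / r i) := by
      calc (1:ℝ) = ∏ _i ∈ Finset.Icc 1 m \ {m}, (1:ℝ) := (Finset.prod_const_one).symm
        _ ≤ ∏ i ∈ Finset.Icc 1 m \ {m}, (1 + r m / r i) := by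
          apply Finset.prod_le_prod (fun i _ => zero_le_one)
          intro i hi
          have hri := hpos i (Finset.mem_Icc.mp (Finset.mem_sdiff.mp hi).1).1
          have := div_pos hrm hri
          linarith
    rw [Finset.prod_eq_prod_diff_singleton_mul hmem]
    have hfm : 1 + r m / r m = 2 := by rw [div_self hrm.ne']; norm_num
    rw [hfm]
    nlinarith
  -- key: size and doubling
  have key : ∀ k, 1 ≤ k → 4 * Real.exp 1 < r k ∧ 2 * r k < r (k + 1) := by
    intro k hk
    induction k with
    | zero => omega
    | succ m ih =>
      by_cases hm : 1 ≤ m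
      · obtain ⟨h4, hd⟩ := ih hm
        have h4' : 4 * Real.exp 1 < r (m + 1) := by linarith
        refine ⟨h4', ?_⟩
        have hrm1 : 0 < r (m + 1) := by linarith
        have hrec' := hrec (m + 1) (by omega)
        have hp := hprod (m + 1) (by omega)
        have h2C : 2 * C * r (m + 1) ^ 2 ≤ r (m + 1 + 1) := by
          rw [hrec']
          nlinarith [mul_pos hC0 (pow_pos hrm1 2)]
        have hCr : 1 < C * r (m + 1) := by
          have h1 : (4 * Real.exp 1) * C = 1 := by rw [hC]; field_simp
          nlinarith
        nlinarith
      · have hm0 : m = 0 := by omega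
        subst hm0
        refine ⟨hr1, ?_⟩
        have hr1pos : 0 < r 1 := hpos 1 le_rfl
        have heq : 2 * C * r 1 ^ 2 = r 1 ^ 2 / (2 * Real.exp 1) := by
          rw [hC]; field_simp; ring
        rw [show (1:ℕ) + 1 = 2 from rfl, hr2, heq, lt_div_iff₀ (by positivity)]
        nlinarith
  have hdouble : ∀ k, 1 ≤ k → 2 * r k < r (k + 1) := fun k hk => (key k hk).2
  -- geometric growth
  have hgeo : ∀ k, 1 ≤ k → ∀ j, 2 ^ j * r k ≤ r (k + j) := by
    intro k hk j
    induction j with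
    | zero => simp
    | succ j ih =>
      have hd := hdouble (k + j) (by omega)
      have h2j : (0:ℝ) < 2 ^ j := by positivity
      calc (2:ℝ) ^ (j + 1) * r k = 2 * (2 ^ j * r k) := by ring
        _ ≤ 2 * r (k + j) := by linarith
        _ ≤ r (k + j + 1) := le_of_lt hd
  have hmono : ∀ a b, 1 ≤ a → a ≤ b → r a ≤ r b := by
    intro a b ha hab
    obtain ⟨j, rfl⟩ := Nat.exists_eq_add_of_le hab
    have h := hgeo a ha j
    have h1 : (1:ℝ) ≤ 2 ^ j := one_le_pow₀ (by norm_num)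
    nlinarith [hpos a ha]
  -- partial sums bound
  have hsum1 : ∀ m, 1 ≤ m → ∑ k ∈ Finset.Icc 1 m, r k < 2 * r m := by
    intro m hm
    induction m with
    | zero => omega
    | succ m ih =>
      by_cases hm' : 1 ≤ m
      · rw [Finset.sum_Icc_succ_top (by omega)]
        have h1 := ih hm'
        have h2 := hdouble m hm'
        linarith
      · have : m = 0 := by omega
        subst this
        simp only [Finset.Icc_self, Finset.sum_singleton]
        linarith [hpos 1 le_rfl]
  set R := ‖z‖ with hRdef
  have hrn := hpos n (by omega)
  have hrn1 := hpos (n + 1) (by omega)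
  have hrn2 := hpos (n + 2) (by omega)
  have hRpos : 0 < R := by linarith
  have hn1 : 1 ≤ n - 1 := by omega
  have hrnm1 := hpos (n - 1) hn1
  constructor
  · -- Part 1
    have hterm : ∀ k ∈ Finset.Icc 1 (n - 1),
        Real.log ((1 + r k / R) / (1 - r k / R)) < 3 * (r k / R) := by
      intro k hk
      obtain ⟨hk1, hk2⟩ := Finset.mem_Icc.mp hk
      have hrk := hpos k hk1
      have hle : r k ≤ r n := hmono k n hk1 (by omega)
      have hx2 : r k / R < 1 / 2 := by
        rw [div_lt_iff₀ hRpos]; linarith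
      exact log_ratio_lt_three_mul (div_pos hrk hRpos) hx2
    have hS1 : (∑ k ∈ Finset.Icc 1 (n - 1), Real.log ((1 + r k / R) / (1 - r k / R)))
        < ∑ k ∈ Finset.Icc 1 (n - 1), 3 * (r k / R) :=
      Finset.sum_lt_sum_of_nonempty ⟨1, Finset.mem_Icc.mpr ⟨le_rfl, hn1⟩⟩ hterm
    have hS2 : ∑ k ∈ Finset.Icc 1 (n - 1), 3 * (r k / R)
        = (∑ k ∈ Finset.Icc 1 (n - 1), r k) * (3 / R) := by
      rw [Finset.sum_mul]
      exact Finset.sum_congr rfl (fun k _ => by ring)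
    have hsum := hsum1 (n - 1) hn1
    have hS3 : (∑ k ∈ Finset.Icc 1 (n - 1), r k) * (3 / R) < 2 * r (n - 1) * (3 / R) := by
      apply mul_lt_mul_of_pos_right hsum (by positivity)
    have hS4 : 2 * r (n - 1) * (3 / R) < 3 * r (n - 1) / (2 * r n) := by
      rw [mul_div_assoc', div_lt_div_iff₀ hRpos (by positivity)]
      nlinarith
    calc (∑ k ∈ Finset.Icc 1 (n - 1), Real.log ((1 + r k / R) / (1 - r k / R)))
        < ∑ k ∈ Finset.Icc 1 (n - 1), 3 * (r k / R) := hS1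
      _ = (∑ k ∈ Finset.Icc 1 (n - 1), r k) * (3 / R) := hS2
      _ < 2 * r (n - 1) * (3 / R) := hS3
      _ < 3 * r (n - 1) / (2 * r n) := hS4
  · -- Part 2
    set a : ℕ → ℝ := fun j => Real.log ((1 + R / r (n + 2 + j)) / (1 - R / r (n + 2 + j)))
      with ha_def
    set b : ℕ → ℝ := fun j => (3 * R / r (n + 2)) * (1 / 2) ^ j with hb_def
    have hrj : ∀ j, 0 < r (n + 2 + j) := fun j => hpos _ (by omega)
    have hgeoj : ∀ j, 2 ^ j * r (n + 2) ≤ r (n + 2 + j) := by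
      intro j
      have := hgeo (n + 2) (by omega) j
      exact this
    have hy : ∀ j, R / r (n + 2 + j) < 1 / 2 := by
      intro j
      have h1 := hgeoj j
      have h2 : (1:ℝ) ≤ 2 ^ j := one_le_pow₀ (by norm_num)
      have hd := hdouble (n + 1) (by omega)
      have h3 : r (n + 2) ≤ r (n + 2 + j) := by nlinarith
      rw [div_lt_iff₀ (hrj j)]
      nlinarith
    have hy0 : ∀ j, 0 < R / r (n + 2 + j) := fun j => div_pos hRpos (hrj j)
    have hab : ∀ j, a j ≤ b j := by
      intro j
      have h1 : a j < 3 * (R / r (n + 2 + j)) :=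
        log_ratio_lt_three_mul (hy0 j) (hy j)
      have h2j : (0:ℝ) < 2 ^ j := by positivity
      have h2 : R / r (n + 2 + j) ≤ R / (2 ^ j * r (n + 2)) :=
        div_le_div_of_nonneg_left hRpos.le (by positivity) (hgeoj j)
      have h3 : (3 * R / r (n + 2)) * (1 / 2) ^ j = 3 * (R / (2 ^ j * r (n + 2))) := by
        field_simp
        rw [← mul_pow]; norm_num
      rw [hb_def]
      simp only []
      rw [h3]
      linarith
    have ha_nonneg : ∀ j, 0 ≤ a j := by
      intro j
      apply Real.log_nonneg
      have h1 : (0:ℝ) < 1 - R / r (n + 2 + j) := by linarith [hy j]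
      rw [le_div_iff₀ h1]
      linarith [hy0 j]
    have hb_summable : Summable b := by
      apply Summable.mul_left
      exact summable_geometric_of_lt_one (by norm_num) (by norm_num)
    have ha_summable : Summable a := Summable.of_nonneg_of_le ha_nonneg hab hb_summable
    have htsum_le : ∑' j, a j ≤ ∑' j, b j := Summable.tsum_le_tsum hab ha_summable hb_summable
    have htsum_b : ∑' j, b j = (3 * R / r (n + 2)) * 2 := by
      rw [hb_def, tsum_mul_left, tsum_geometric_of_lt_one (by norm_num) (by norm_num)]
      norm_num
    have hfinal : (3 * R / r (n + 2)) * 2 < 3 * r (n + 1) / (2 * r (n + 2)) := by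
      have heq : (3 * R / r (n + 2)) * 2 = 6 * R / r (n + 2) := by ring
      rw [heq, div_lt_div_iff₀ hrn2 (by positivity)]
      nlinarith
    calc (∑' j, a j) ≤ ∑' j, b j := htsum_le
      _ = (3 * R / r (n + 2)) * 2 := htsum_b
      _ < 3 * r (n + 1) / (2 * r (n + 2)) := hfinal
end

section
/- Let (r_k) be positive reals with r_{k+1} ≥ C r_k² for a constant C > 0 and r_k → ∞, and let z lie in the annulus r_n² < |z| < √(r_{n+1}). Then ∑_{k=1}^∞ 1/|z - r_k| ≤ 2n/r_n² + 2/r_{n+1} + 2/(C r_{n+1}²) for all sufficiently large n; in particular ∑_{k=1}^∞ 1/(z - r_k) → 0 as z → ∞ through the annuli. -/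
open Filter Finset

lemma pole_sum_key (C : ℝ) (r : ℕ → ℝ) (n : ℕ)
    (hCpos : 0 < C)
    (hpos : ∀ k, 1 ≤ k → 0 < r k)
    (hmono : ∀ k m, 1 ≤ k → k ≤ m → r k ≤ r m)
    (hG : ∀ m j, 1 ≤ m → 2 ^ j * r m ≤ r (m + j))
    (hn : 1 ≤ n)
    (h2 : 2 ≤ r n)
    (hs2 : Real.sqrt (r (n+1)) ≤ r (n+1) / 2)
    (hs4 : Real.sqrt (r (n+1)) ≤ C * r (n+1)^2 / 4)
    (hA : C * r (n+1)^2 ≤ r (n+2))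
    (hB : 6 * (C * r (n+1)^2) ≤ r (n+3))
    (z : ℂ)
    (hz1 : r n ^ 2 < ‖z‖)
    (hz2 : ‖z‖ < Real.sqrt (r (n+1))) :
    Summable (fun k : ℕ => 1 / ‖z - (r (k+1) : ℂ)‖) ∧
    (∑' k : ℕ, 1 / ‖z - (r (k + 1) : ℂ)‖)
        ≤ 2 * n / r n ^ 2 + 2 / r (n + 1) + 2 / (C * r (n + 1) ^ 2) := by
  have hrn := hpos n hn
  have hrn1 := hpos (n+1) (by omega)
  have hrn2 := hpos (n+2) (by omega)
  have hrn3 := hpos (n+3) (by omega)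
  have hApos : 0 < C * r (n+1)^2 := by positivity
  -- reverse triangle inequalities
  have habs_lb : ∀ m : ℕ, 1 ≤ m →
      r m - ‖z‖ ≤ ‖z - (r m : ℂ)‖ ∧
      ‖z‖ - r m ≤ ‖z - (r m : ℂ)‖ := by
    intro m hm
    have h1 : ‖(r m : ℂ) - z‖ = ‖z - (r m : ℂ)‖ := norm_sub_rev _ _
    have h2 := norm_sub_norm_le ((r m : ℂ)) z
    have h3 := norm_sub_norm_le z ((r m : ℂ))
    have h4 : ‖(r m : ℂ)‖ = r m := by
      simp [Complex.norm_real, abs_of_pos (hpos m hm)]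
    constructor <;> linarith
  have lb1 : ∀ k, k < n → r n ^ 2 / 2 ≤ ‖z - (r (k+1) : ℂ)‖ := by
    intro k hk
    have h1 := (habs_lb (k+1) (by omega)).2
    have h2' := hmono (k+1) n (by omega) (by omega)
    nlinarith
  have lbn : r (n+1) / 2 ≤ ‖z - (r (n+1) : ℂ)‖ := by
    have h1 := (habs_lb (n+1) (by omega)).1
    linarith
  have lbA : 3 * (C * r (n+1)^2) / 4 ≤ ‖z - (r (n+2) : ℂ)‖ := by
    have h1 := (habs_lb (n+2) (by omega)).1
    linarith
  have lbtail : ∀ j : ℕ,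
      2 ^ j * r (n+3) / 2 ≤ ‖z - (r (j + (n+2) + 1) : ℂ)‖ := by
    intro j
    have hidx : j + (n+2) + 1 = (n+3) + j := by omega
    rw [hidx]
    have h1 : 2 ^ j * r (n+3) ≤ r ((n+3) + j) := hG (n+3) j (by omega)
    have h2' := (habs_lb ((n+3)+j) (by omega)).1
    have h2j : (1:ℝ) ≤ 2 ^ j := one_le_pow₀ one_le_two
    linarith [mul_le_mul_of_nonneg_right h2j hrn3.le]
  -- shifted tail is summable and bounded
  have hgeo : Summable (fun j : ℕ => (2 / r (n+3)) * (1/2 : ℝ) ^ j) :=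
    summable_geometric_two.mul_left _
  have htermtail : ∀ j : ℕ,
      1 / ‖z - (r (j + (n+2) + 1) : ℂ)‖ ≤ (2 / r (n+3)) * (1/2 : ℝ) ^ j := by
    intro j
    have h2j : (0:ℝ) < 2 ^ j := by positivity
    calc 1 / ‖z - (r (j + (n+2) + 1) : ℂ)‖
        ≤ 1 / (2 ^ j * r (n+3) / 2) :=
          one_div_le_one_div_of_le (by positivity) (lbtail j)
      _ = (2 / r (n+3)) * (1/2 : ℝ) ^ j := by
          rw [one_div_pow]
          field_simp
  have hsum_shift : Summable (fun j : ℕ => 1 / ‖z - (r (j + (n+2) + 1) : ℂ)‖) := by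
    apply Summable.of_nonneg_of_le (fun j => by positivity) htermtail hgeo
  have hsum : Summable (fun k : ℕ => 1 / ‖z - (r (k+1) : ℂ)‖) :=
    (summable_nat_add_iff (n+2)).mp hsum_shift
  refine ⟨hsum, ?_⟩
  have hsplit := Summable.sum_add_tsum_nat_add (f := fun k : ℕ => 1 / ‖z - (r (k+1) : ℂ)‖)
    (n+2) hsum
  rw [← hsplit]
  beta_reduce
  have htail : (∑' j : ℕ, 1 / ‖z - (r (j + (n+2) + 1) : ℂ)‖)
      ≤ 2 / (3 * (C * r (n+1)^2)) := by
    have h1 : (∑' j : ℕ, 1 / ‖z - (r (j + (n+2) + 1) : ℂ)‖)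
        ≤ ∑' j : ℕ, (2 / r (n+3)) * (1/2 : ℝ) ^ j :=
      Summable.tsum_le_tsum htermtail hsum_shift hgeo
    have h2' : (∑' j : ℕ, (2 / r (n+3)) * (1/2 : ℝ) ^ j) = 4 / r (n+3) := by
      rw [tsum_mul_left, tsum_geometric_two]; ring
    have h3 : 4 / r (n+3) ≤ 4 / (6 * (C * r (n+1)^2)) := by
      apply div_le_div_of_nonneg_left (by norm_num) (by positivity) hB
    have h4 : 4 / (6 * (C * r (n+1)^2)) = 2 / (3 * (C * r (n+1)^2)) := by ring
    linarith
  have hfin : (∑ k ∈ range (n+2), 1 / ‖z - (r (k+1) : ℂ)‖)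
      ≤ n * (2 / r n ^ 2) + 2 / r (n+1) + 4 / (3 * (C * r (n+1)^2)) := by
    rw [Finset.sum_range_succ, Finset.sum_range_succ]
    have hb1 : (∑ k ∈ range n, 1 / ‖z - (r (k+1) : ℂ)‖)
        ≤ n * (2 / r n ^ 2) := by
      calc (∑ k ∈ range n, 1 / ‖z - (r (k+1) : ℂ)‖)
          ≤ ∑ _k ∈ range n, 2 / r n ^ 2 := by
            apply Finset.sum_le_sum
            intro k hk
            have := one_div_le_one_div_of_le (by positivity) (lb1 k (Finset.mem_range.mp hk))
            rwa [one_div_div] at this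
        _ = n * (2 / r n ^ 2) := by rw [Finset.sum_const, Finset.card_range, nsmul_eq_mul]
    have hb2 : 1 / ‖z - (r (n+1) : ℂ)‖ ≤ 2 / r (n+1) := by
      have := one_div_le_one_div_of_le (by positivity) lbn
      rwa [one_div_div] at this
    have hb3 : 1 / ‖z - (r (n+1+1) : ℂ)‖ ≤ 4 / (3 * (C * r (n+1)^2)) := by
      have h0 : (0:ℝ) < 3 * (C * r (n+1)^2) / 4 := by positivity
      have h := one_div_le_one_div_of_le h0 lbA
      rw [one_div_div] at h
      exact h
    linarith
  have harith : (n : ℝ) * (2 / r n ^ 2) + 2 / r (n+1) + 4 / (3 * (C * r (n+1)^2))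
      + 2 / (3 * (C * r (n+1)^2))
      = 2 * n / r n ^ 2 + 2 / r (n + 1) + 2 / (C * r (n + 1) ^ 2) := by ring
  linarith

set_option maxHeartbeats 1600000 in
theorem pole_sum_estimate (C : ℝ) (r : ℕ → ℝ)
    (hCpos : 0 < C)
    (hpos : ∀ k, 1 ≤ k → 0 < r k)
    (hquad : ∀ k, 1 ≤ k → r (k + 1) ≥ C * r k ^ 2)
    (htend : Tendsto r atTop atTop)
    (hgrow : ∀ j n, 1 ≤ j → 1 ≤ n → r (n + j) > 2 ^ j * r n) :
    (∀ᶠ n in atTop, ∀ z : ℂ,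
      r n ^ 2 < ‖z‖ → ‖z‖ < Real.sqrt (r (n + 1)) →
      (∑' k : ℕ, 1 / ‖z - (r (k + 1) : ℂ)‖)
        ≤ 2 * n / r n ^ 2 + 2 / r (n + 1) + 2 / (C * r (n + 1) ^ 2)) ∧
    (∀ ε : ℝ, 0 < ε → ∃ N : ℕ, ∀ n, N ≤ n → ∀ z : ℂ,
      r n ^ 2 < ‖z‖ → ‖z‖ < Real.sqrt (r (n + 1)) →
      ‖∑' k : ℕ, 1 / (z - (r (k + 1) : ℂ))‖ < ε) := by
  have hG : ∀ m j, 1 ≤ m → 2 ^ j * r m ≤ r (m + j) := by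
    intro m j hm
    cases j with
    | zero => simp
    | succ j => exact (hgrow (j+1) m (by omega) hm).le
  have hmono : ∀ k m, 1 ≤ k → k ≤ m → r k ≤ r m := by
    intro k m hk hkm
    obtain ⟨j, rfl⟩ := Nat.exists_eq_add_of_le hkm
    calc r k ≤ 2 ^ j * r k :=
          le_mul_of_one_le_left (hpos k hk).le (one_le_pow₀ one_le_two)
      _ ≤ r (k + j) := hG k j hk
  -- the combined eventual statement, with summability
  set M : ℝ := max 4 (max 1 (16 / C ^ 2)) with hM
  have hmain : ∀ᶠ n in atTop, ∀ z : ℂ,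
      r n ^ 2 < ‖z‖ → ‖z‖ < Real.sqrt (r (n + 1)) →
      Summable (fun k : ℕ => 1 / ‖z - (r (k+1) : ℂ)‖) ∧
      (∑' k : ℕ, 1 / ‖z - (r (k + 1) : ℂ)‖)
        ≤ 2 * n / r n ^ 2 + 2 / r (n + 1) + 2 / (C * r (n + 1) ^ 2) := by
    have e1 : ∀ᶠ n : ℕ in atTop, 1 ≤ n := eventually_ge_atTop 1
    have e2 : ∀ᶠ n : ℕ in atTop, 2 ≤ r n := htend.eventually_ge_atTop 2
    have e3 : ∀ᶠ n : ℕ in atTop, M ≤ r (n+1) :=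
      (htend.comp (tendsto_add_atTop_nat 1)).eventually_ge_atTop M
    filter_upwards [e1, e2, e3] with n hn h2 hMn z hz1 hz2
    have hx4 : (4:ℝ) ≤ r (n+1) := le_trans (le_max_left _ _) hMn
    have hx1 : (1:ℝ) ≤ r (n+1) := le_trans (le_trans (le_max_left _ _) (le_max_right _ _)) hMn
    have hx16 : 16 / C ^ 2 ≤ r (n+1) := le_trans (le_trans (le_max_right _ _) (le_max_right _ _)) hMn
    have hrn1 : (0:ℝ) < r (n+1) := by linarith
    have hC2 : (16:ℝ) ≤ C ^ 2 * r (n+1) := by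
      rw [div_le_iff₀ (by positivity)] at hx16
      linarith [hx16]
    have hxx : r (n+1) ≤ r (n+1) * r (n+1) := by nlinarith
    have h8 : (16:ℝ) ≤ C ^ 2 * r (n+1) ^ 2 := by nlinarith [mul_le_mul_of_nonneg_left hxx (sq_nonneg C)]
    have hs2 : Real.sqrt (r (n+1)) ≤ r (n+1) / 2 := by
      rw [Real.sqrt_le_iff]
      exact ⟨by linarith, by nlinarith⟩
    have hs4 : Real.sqrt (r (n+1)) ≤ C * r (n+1) ^ 2 / 4 := by
      rw [Real.sqrt_le_iff]
      refine ⟨by positivity, ?_⟩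
      nlinarith [mul_nonneg (sub_nonneg.mpr h8) (sq_nonneg (r (n+1)))]
    have hA : C * r (n+1) ^ 2 ≤ r (n+2) := hquad (n+1) (by omega)
    have hApos : (0:ℝ) < C * r (n+1) ^ 2 := by positivity
    have hB : 6 * (C * r (n+1) ^ 2) ≤ r (n+3) := by
      have q3 : C * r (n+2) ^ 2 ≤ r (n+3) := hquad (n+2) (by omega)
      have hsq2 : (C * r (n+1) ^ 2) ^ 2 ≤ r (n+2) ^ 2 := by nlinarith
      have h5 : C * (C * r (n+1) ^ 2) ^ 2 ≤ C * r (n+2) ^ 2 :=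
        mul_le_mul_of_nonneg_left hsq2 hCpos.le
      have h6 : 6 * (C * r (n+1) ^ 2) ≤ C * (C * r (n+1) ^ 2) ^ 2 := by
        nlinarith [mul_nonneg (sub_nonneg.mpr h8) hApos.le]
      linarith
    exact pole_sum_key C r n hCpos hpos hmono hG hn h2 hs2 hs4 hA hB z hz1 hz2
  constructor
  · exact hmain.mono fun n h z hz1 hz2 => (h z hz1 hz2).2
  · intro ε hε
    have hr1 : 0 < r 1 := hpos 1 le_rfl
    have t1 : ∀ᶠ n : ℕ in atTop, 2 * (n:ℝ) / r n ^ 2 < ε / 4 := by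
      have h1 : Tendsto (fun m : ℕ => ((m:ℝ)+1) * (1/4 : ℝ) ^ m) atTop (nhds 0) := by
        have ha := tendsto_self_mul_const_pow_of_lt_one (r := (1/4 : ℝ)) (by norm_num) (by norm_num)
        have hb : Tendsto (fun m : ℕ => ((1/4 : ℝ)) ^ m) atTop (nhds 0) :=
          tendsto_pow_atTop_nhds_zero_of_lt_one (by norm_num) (by norm_num)
        have hab := ha.add hb
        simpa [add_mul] using hab
      have hc : Tendsto (fun m : ℕ => (2 / r 1 ^ 2) * (((m:ℝ)+1) * (1/4 : ℝ) ^ m))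
          atTop (nhds 0) := by
        simpa using h1.const_mul (2 / r 1 ^ 2)
      have hc' : ∀ᶠ m : ℕ in atTop,
          (2 / r 1 ^ 2) * (((m:ℝ)+1) * (1/4 : ℝ) ^ m) < ε / 4 :=
        hc.eventually_lt_const (by positivity)
      rw [eventually_atTop] at hc' ⊢
      obtain ⟨K, hK⟩ := hc'
      refine ⟨K + 1, fun n hn => ?_⟩
      obtain ⟨m, rfl⟩ : ∃ m, n = m + 1 := ⟨n - 1, by omega⟩
      have hKm : K ≤ m := by omega
      have hgm : 2 ^ m * r 1 ≤ r (m + 1) := by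
        have := hG 1 m le_rfl
        rwa [add_comm] at this
      have h2m : (0:ℝ) < 2 ^ m := by positivity
      have hsq : (4:ℝ) ^ m * r 1 ^ 2 ≤ r (m+1) ^ 2 := by
        have h4 : ((2:ℝ) ^ m) * (2 ^ m) = 4 ^ m := by
          rw [← mul_pow]; norm_num
        nlinarith [hgm, mul_pos h2m hr1]
      have hpos1 : (0:ℝ) < 4 ^ m * r 1 ^ 2 := by positivity
      have hle : 2 * ((m:ℝ)+1) / r (m+1) ^ 2 ≤ 2 * ((m:ℝ)+1) / (4 ^ m * r 1 ^ 2) :=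
        div_le_div_of_nonneg_left (by positivity) hpos1 hsq
      have heq : 2 * ((m:ℝ)+1) / (4 ^ m * r 1 ^ 2)
          = (2 / r 1 ^ 2) * (((m:ℝ)+1) * (1/4 : ℝ) ^ m) := by
        rw [one_div_pow]
        field_simp
      have hK' := hK m hKm
      push_cast
      rw [heq] at hle
      linarith
    have t2 : ∀ᶠ n : ℕ in atTop, 2 / r (n+1) < ε / 4 := by
      have e : ∀ᶠ n : ℕ in atTop, 9 / ε ≤ r (n+1) :=
        (htend.comp (tendsto_add_atTop_nat 1)).eventually_ge_atTop _
      filter_upwards [e] with n hn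
      have h9 : (0:ℝ) < 9 / ε := by positivity
      have hr : (0:ℝ) < r (n+1) := lt_of_lt_of_le h9 hn
      rw [div_lt_iff₀ hr]
      have hm := mul_le_mul_of_nonneg_left hn (show (0:ℝ) ≤ ε/4 by positivity)
      have heq : ε/4 * (9/ε) = 9/4 := by field_simp
      linarith [hm, heq ▸ hm]
    have t3 : ∀ᶠ n : ℕ in atTop, 2 / (C * r (n+1) ^ 2) < ε / 4 := by
      have e : ∀ᶠ n : ℕ in atTop, max 1 (9 / (ε * C)) ≤ r (n+1) :=
        (htend.comp (tendsto_add_atTop_nat 1)).eventually_ge_atTop _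
      filter_upwards [e] with n hn
      have hx1 : (1:ℝ) ≤ r (n+1) := le_trans (le_max_left _ _) hn
      have hx9 : 9 / (ε * C) ≤ r (n+1) := le_trans (le_max_right _ _) hn
      have hr : (0:ℝ) < r (n+1) := by linarith
      have h9 : (9:ℝ) ≤ r (n+1) * (ε * C) := by
        rw [div_le_iff₀ (by positivity)] at hx9
        linarith
      have hpos2 : (0:ℝ) < C * r (n+1) ^ 2 := by positivity
      rw [div_lt_iff₀ hpos2]
      have hmul := mul_le_mul_of_nonneg_left hx1
        (show (0:ℝ) ≤ r (n+1) * (ε * C) by positivity)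
      rw [mul_one] at hmul
      have h2' : (9:ℝ) ≤ r (n+1) * (ε * C) * r (n+1) := le_trans h9 hmul
      have hring : ε/4 * (C * r (n+1) ^ 2) = r (n+1) * (ε * C) * r (n+1) / 4 := by ring
      linarith [h2', hring]
    have tall : ∀ᶠ n : ℕ in atTop,
        2 * (n:ℝ) / r n ^ 2 + 2 / r (n+1) + 2 / (C * r (n+1) ^ 2) < 3 * (ε/4) := by
      filter_upwards [t1, t2, t3] with n a b c
      linarith
    obtain ⟨N1, hN1⟩ := eventually_atTop.mp hmain
    obtain ⟨N2, hN2⟩ := eventually_atTop.mp tall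
    refine ⟨max N1 N2, fun n hn z hz1 hz2 => ?_⟩
    obtain ⟨hsum, hbound⟩ := hN1 n (le_trans (le_max_left _ _) hn) z hz1 hz2
    have hnorm : (fun k : ℕ => ‖1 / (z - (r (k+1):ℂ))‖)
        = fun k : ℕ => 1 / ‖z - (r (k+1):ℂ)‖ := by
      funext k
      rw [norm_div, norm_one]
    have hsumnorm : Summable (fun k : ℕ => ‖1 / (z - (r (k+1):ℂ))‖) := by
      rw [hnorm]; exact hsum
    calc ‖∑' k : ℕ, 1 / (z - (r (k+1):ℂ))‖
        = ‖∑' k : ℕ, 1 / (z - (r (k+1):ℂ))‖ := rfl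
      _ ≤ ∑' k : ℕ, ‖1 / (z - (r (k+1):ℂ))‖ := norm_tsum_le_tsum_norm hsumnorm
      _ = ∑' k : ℕ, 1 / ‖z - (r (k+1):ℂ)‖ := by rw [hnorm]
      _ ≤ 2 * n / r n ^ 2 + 2 / r (n+1) + 2 / (C * r (n+1) ^ 2) := hbound
      _ < ε := by
          have := hN2 n (le_trans (le_max_right _ _) hn)
          linarith
end

section
/- Let P and Q be polynomials over ℂ with P(z) - Q(z) = A z^m + o(|z|^m) as |z| → ∞, where A ≠ 0 and m ≥ 1, and let (a_k) be a sequence of nonzero complex numbers with P(a_k) - Q(a_k) = (2k+1)πi and |a_k| → ∞. Then there exist constants 0 < c₁ < c₂ and k₀ such that c₁ k^{1/m} < |a_k| < c₂ k^{1/m} for all k > k₀; consequently ∑_k 1/|a_k|^λ converges if λ > m and diverges if λ ≤ m. -/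
open Filter Polynomial

theorem zeros_of_exp_sum_asymptotics (P Q : Polynomial ℂ) (A : ℂ) (m : ℕ) (a : ℕ → ℂ)
    (hA : A ≠ 0) (hm : 1 ≤ m)
    (hasymp : Tendsto
      (fun z : ℂ => ‖P.eval z - Q.eval z - A * z ^ m‖ / ‖z‖ ^ m)
      (Filter.comap (fun z : ℂ => ‖z‖) Filter.atTop) (nhds 0))
    (hanz : ∀ k, a k ≠ 0)
    (ha : ∀ k : ℕ, P.eval (a k) - Q.eval (a k) = ((2 * k + 1 : ℝ) * Real.pi) * Complex.I)
    (habs : Tendsto (fun k => ‖a k‖) atTop atTop) :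
    (∃ c₁ c₂ : ℝ, 0 < c₁ ∧ c₁ < c₂ ∧ ∃ k₀ : ℕ, ∀ k, k₀ < k →
      c₁ * (k : ℝ) ^ (1 / (m : ℝ)) < ‖a k‖ ∧
      ‖a k‖ < c₂ * (k : ℝ) ^ (1 / (m : ℝ))) ∧
    (∀ lam : ℝ, Summable (fun k : ℕ => 1 / ‖a k‖ ^ lam) ↔ (m : ℝ) < lam) := by
  set f : ℕ → ℝ := fun k => ‖a k‖ with hf
  have hfpos : ∀ k, 0 < f k := fun k => norm_pos_iff.mpr (hanz k)
  have hm0 : (m : ℝ) ≠ 0 := Nat.cast_ne_zero.mpr (by omega)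
  have hmpos : (0:ℝ) < m := by positivity
  have habsA : 0 < ‖A‖ := norm_pos_iff.mpr hA
  -- step 1 : (2k+1)π / f^m → |A|
  have h2 : Tendsto (fun k : ℕ => ((2 * k + 1 : ℝ) * Real.pi) / f k ^ m) atTop
      (nhds (‖A‖)) := by
    have h0 : Tendsto (fun k : ℕ =>
        ‖P.eval (a k) - Q.eval (a k) - A * (a k) ^ m‖ / f k ^ m) atTop (nhds 0) :=
      hasymp.comp (tendsto_comap_iff.mpr habs)
    rw [tendsto_iff_dist_tendsto_zero]
    refine squeeze_zero (fun k => dist_nonneg) (fun k => ?_) h0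
    have key : dist (((2 * k + 1 : ℝ) * Real.pi) / f k ^ m) (‖A‖)
        ≤ ‖((2 * k + 1 : ℝ) * Real.pi) * Complex.I - A * (a k) ^ m‖ / f k ^ m := by
      have hfk : (0:ℝ) < f k ^ m := pow_pos (hfpos k) m
      rw [Real.dist_eq, div_sub' (ne_of_gt hfk), abs_div, abs_of_pos hfk,
        div_le_div_iff_of_pos_right hfk]
      have h1 : ‖((2 * k + 1 : ℝ) * Real.pi) * Complex.I‖
          = (2 * k + 1 : ℝ) * Real.pi := by
        simp only [norm_mul, Complex.norm_I, mul_one, Complex.norm_real, Real.norm_eq_abs]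
        rw [abs_of_nonneg (by positivity), abs_of_nonneg Real.pi_pos.le]
      rw [mul_comm (f k ^ m)]
      calc |(2 * ↑k + 1) * Real.pi - ‖A‖ * f k ^ m|
          = |‖((2 * k + 1 : ℝ) * Real.pi) * Complex.I‖
              - ‖A * (a k) ^ m‖| := by rw [h1, norm_mul, norm_pow]
        _ ≤ ‖((2 * k + 1 : ℝ) * Real.pi) * Complex.I - A * (a k) ^ m‖ :=
            abs_norm_sub_norm_le _ _
    calc dist ((2 * ↑k + 1) * Real.pi / f k ^ m) (‖A‖)
        ≤ _ := key
      _ = _ := by rw [ha k]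
  -- step 2 : f^m / k → 2π/|A|
  have h5 : Tendsto (fun k : ℕ => f k ^ m / (k : ℝ)) atTop
      (nhds (2 * Real.pi / ‖A‖)) := by
    have h3 : Tendsto (fun k : ℕ => f k ^ m / ((2 * k + 1 : ℝ) * Real.pi)) atTop
        (nhds ((‖A‖)⁻¹)) := by
      have := (h2.inv₀ habsA.ne')
      refine this.congr fun k => ?_
      rw [inv_div]
    have h4 : Tendsto (fun k : ℕ => ((2 * k + 1 : ℝ) * Real.pi) / (k : ℝ)) atTop
        (nhds (2 * Real.pi)) := by
      have hb : Tendsto (fun k : ℕ => (2 + 1 / (k : ℝ)) * Real.pi) atTop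
          (nhds ((2 + 0) * Real.pi)) :=
        ((tendsto_const_nhds.add (tendsto_one_div_atTop_nhds_zero_nat)).mul tendsto_const_nhds)
      rw [add_zero] at hb
      refine hb.congr' ?_
      filter_upwards [eventually_gt_atTop 0] with k hk
      have : (k : ℝ) ≠ 0 := Nat.cast_ne_zero.mpr hk.ne'
      field_simp
    have hmul := h3.mul h4
    have heq : (‖A‖)⁻¹ * (2 * Real.pi) = 2 * Real.pi / ‖A‖ := by
      field_simp
    rw [heq] at hmul
    refine hmul.congr' ?_
    filter_upwards [eventually_gt_atTop 0] with k hk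
    have hk0 : (k : ℝ) ≠ 0 := Nat.cast_ne_zero.mpr hk.ne'
    have hpk : ((2 * (k:ℝ) + 1) * Real.pi) ≠ 0 := by positivity
    field_simp
  -- step 3 : f k / k^(1/m) → L
  set L : ℝ := (2 * Real.pi / ‖A‖) ^ (1 / (m : ℝ)) with hL
  have hLpos : 0 < L := Real.rpow_pos_of_pos (by positivity) _
  have h6 : Tendsto (fun k : ℕ => f k / (k : ℝ) ^ (1 / (m : ℝ))) atTop (nhds L) := by
    have := h5.rpow_const (Or.inr (by positivity : (0:ℝ) ≤ 1 / (m : ℝ)))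
    refine this.congr' ?_
    filter_upwards [eventually_gt_atTop 0] with k hk
    have hk0 : (0:ℝ) ≤ (k : ℝ) := Nat.cast_nonneg k
    rw [Real.div_rpow (by positivity) hk0, ← Real.rpow_natCast (f k) m,
      ← Real.rpow_mul (hfpos k).le, mul_one_div_cancel hm0, Real.rpow_one]
  -- step 4 : the two-sided bound
  have hIoo : ∀ᶠ k in atTop, f k / (k : ℝ) ^ (1 / (m : ℝ)) ∈ Set.Ioo (L / 2) (2 * L) :=
    h6.eventually (Ioo_mem_nhds (by linarith) (by linarith))
  obtain ⟨k₀, hk₀⟩ := (hIoo.and (eventually_gt_atTop 0)).exists_forall_of_atTop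
  have hbound : ∀ k, k₀ < k →
      L / 2 * (k : ℝ) ^ (1 / (m : ℝ)) < f k ∧ f k < 2 * L * (k : ℝ) ^ (1 / (m : ℝ)) := by
    intro k hk
    obtain ⟨⟨hlo, hhi⟩, hkpos⟩ := hk₀ k hk.le
    have hkp : (0:ℝ) < (k : ℝ) ^ (1 / (m : ℝ)) :=
      Real.rpow_pos_of_pos (by exact_mod_cast hkpos) _
    constructor
    · exact (lt_div_iff₀ hkp).mp hlo
    · exact (div_lt_iff₀ hkp).mp hhi
  refine ⟨⟨L / 2, 2 * L, by linarith, by linarith, k₀, hbound⟩, ?_⟩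
  -- step 5 : summability
  intro lam
  constructor
  · intro hsum
    -- first : lam > 0
    have hlampos : 0 < lam := by
      by_contra hle
      push_neg at hle
      have h1 : ∀ᶠ k : ℕ in atTop, (1:ℝ) ≤ 1 / f k ^ lam := by
        filter_upwards [habs.eventually_ge_atTop 1] with k hk
        rw [one_div, ← Real.rpow_neg (hfpos k).le]
        exact Real.one_le_rpow hk (neg_nonneg.mpr hle)
      have h2' : ∀ᶠ k : ℕ in atTop, 1 / f k ^ lam < 1 :=
        hsum.tendsto_atTop_zero.eventually (eventually_lt_nhds one_pos)
      obtain ⟨k, hk1, hk2⟩ := (h1.and h2').exists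
      linarith
    by_contra hgt
    push_neg at hgt
    have hdiv : ¬ Summable (fun k : ℕ => (k : ℝ) ^ (-(lam / (m : ℝ)))) := by
      rw [Real.summable_nat_rpow]
      push_neg
      rw [neg_le_neg_iff]
      exact (div_le_one hmpos).mpr hgt
    refine hdiv (summable_of_isBigO_nat hsum ?_)
    rw [Asymptotics.isBigO_iff]
    refine ⟨(2 * L) ^ lam, ?_⟩
    filter_upwards [eventually_gt_atTop k₀, eventually_gt_atTop 0] with k hk hkpos
    obtain ⟨_, hhi⟩ := hbound k hk
    have hkp : (0:ℝ) < (k : ℝ) ^ (1 / (m : ℝ)) :=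
      Real.rpow_pos_of_pos (by exact_mod_cast hkpos) _
    have hk0 : (0:ℝ) ≤ (k : ℝ) := Nat.cast_nonneg k
    have hflam : f k ^ lam < ((2 * L) * (k : ℝ) ^ (1 / (m : ℝ))) ^ lam :=
      Real.rpow_lt_rpow (hfpos k).le hhi hlampos
    rw [Real.mul_rpow (by linarith) hkp.le, ← Real.rpow_mul hk0,
      show (1 / (m:ℝ)) * lam = lam / m by ring] at hflam
    have hkq : (0:ℝ) < (k : ℝ) ^ (lam / (m : ℝ)) :=
      Real.rpow_pos_of_pos (by exact_mod_cast hkpos) _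
    have hflampos : (0:ℝ) < f k ^ lam := Real.rpow_pos_of_pos (hfpos k) _
    rw [Real.norm_eq_abs, Real.norm_eq_abs,
      abs_of_nonneg (Real.rpow_nonneg hk0 _), abs_of_nonneg (by positivity),
      Real.rpow_neg hk0, ← one_div, mul_one_div, div_le_div_iff₀ hkq hflampos]
    nlinarith [Real.rpow_pos_of_pos (by linarith : (0:ℝ) < 2 * L) lam]
  · intro hlam
    have hlampos : 0 < lam := lt_of_le_of_lt (by exact_mod_cast hmpos.le.trans (le_of_eq rfl)) hlam
    have hconv : Summable (fun k : ℕ => (k : ℝ) ^ (-(lam / (m : ℝ)))) := by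
      rw [Real.summable_nat_rpow, neg_lt_neg_iff]
      exact (one_lt_div hmpos).mpr hlam
    refine summable_of_isBigO_nat hconv ?_
    rw [Asymptotics.isBigO_iff]
    refine ⟨(L / 2) ^ (-lam), ?_⟩
    filter_upwards [eventually_gt_atTop k₀, eventually_gt_atTop 0] with k hk hkpos
    obtain ⟨hlo, _⟩ := hbound k hk
    have hk0 : (0:ℝ) ≤ (k : ℝ) := Nat.cast_nonneg k
    have hkp : (0:ℝ) < (k : ℝ) ^ (1 / (m : ℝ)) :=
      Real.rpow_pos_of_pos (by exact_mod_cast hkpos) _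
    have hflam : ((L / 2) * (k : ℝ) ^ (1 / (m : ℝ))) ^ lam < f k ^ lam :=
      Real.rpow_lt_rpow (by positivity) hlo hlampos
    rw [Real.mul_rpow (by linarith) hkp.le, ← Real.rpow_mul hk0,
      show (1 / (m:ℝ)) * lam = lam / m by ring] at hflam
    have hkq : (0:ℝ) < (k : ℝ) ^ (lam / (m : ℝ)) :=
      Real.rpow_pos_of_pos (by exact_mod_cast hkpos) _
    have hflampos : (0:ℝ) < f k ^ lam := Real.rpow_pos_of_pos (hfpos k) _
    have hLl : (0:ℝ) < (L / 2) ^ lam := Real.rpow_pos_of_pos (by linarith) _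
    rw [Real.norm_eq_abs, Real.norm_eq_abs,
      abs_of_nonneg (by positivity), abs_of_nonneg (Real.rpow_nonneg hk0 _),
      Real.rpow_neg hk0, ← one_div, one_div, Real.rpow_neg (by linarith : (0:ℝ) ≤ L / 2)]
    calc (f k ^ lam)⁻¹ ≤ ((L / 2) ^ lam * (k:ℝ) ^ (lam / (m:ℝ)))⁻¹ :=
          inv_anti₀ (by positivity) hflam.le
      _ = ((L / 2) ^ lam)⁻¹ * (1 / (k:ℝ) ^ (lam / (m:ℝ))) := by rw [mul_inv, one_div]
end
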